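/- arXiv:1211.2066 — 5 statements merged into one kernel-verified Lean document; each statement's English description precedes it below -/
import Mathlib

section
/- Let G be a connected undirected graph with edge weights, partitioned into vertex-disjoint clusters Q_1,...,Q_k. Let G_i be the subgraph induced by Q_i and let T_i be a minimum spanning tree of each connected component collection of G_i (assume each G_i is connected with MST T_i). Let U be the subgraph of G consisting of the union of the edge sets of T_1,...,T_k together with all edges of G whose endpoints lie in different clusters. Then U contains a minimum spanning tree of G. -/
open SimpleGraph

/-- `T` is a spanning tree of `G`: a subgraph (on the same vertex set) that is
connected and acyclic. -/
def IsSpanningTree {V : Type*} (G T : SimpleGraph V) : Prop :=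
  T ≤ G ∧ T.Connected ∧ T.IsAcyclic

/-- Total weight of the edges of a graph. -/
noncomputable def treeWeight {V : Type*} [Fintype V] (T : SimpleGraph V)
    (w : Sym2 V → ℝ) : ℝ :=
  ∑ e ∈ T.edgeSet.toFinite.toFinset, w e

/-- `T` is a minimum spanning tree of `G` with respect to `w`. -/
def IsMST {V : Type*} [Fintype V] (G T : SimpleGraph V) (w : Sym2 V → ℝ) : Prop :=
  IsSpanningTree G T ∧
    ∀ T' : SimpleGraph V, IsSpanningTree G T' → treeWeight T w ≤ treeWeight T' w

section Aux

variable {W : Type*}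

lemma reach_delete_cases {G : SimpleGraph W} {u v a b : W} (p : G.Walk a b) :
    (G.deleteEdges {s(u,v)}).Reachable a b ∨
    ((G.deleteEdges {s(u,v)}).Reachable a u ∧ (G.deleteEdges {s(u,v)}).Reachable v b) ∨
    ((G.deleteEdges {s(u,v)}).Reachable a v ∧ (G.deleteEdges {s(u,v)}).Reachable u b) := by
  induction p with
  | nil => exact Or.inl (Reachable.refl _)
  | @cons a c b h q ih =>
    by_cases he : s(a, c) = s(u, v)
    · rw [Sym2.eq_iff] at he
      rcases he with ⟨rfl, rfl⟩ | ⟨rfl, rfl⟩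
      · rcases ih with h1 | ⟨_, h2⟩ | ⟨_, h3⟩
        · exact Or.inr (Or.inl ⟨Reachable.refl _, h1⟩)
        · exact Or.inr (Or.inl ⟨Reachable.refl _, h2⟩)
        · exact Or.inl h3
      · rcases ih with h1 | ⟨_, h2⟩ | ⟨_, h3⟩
        · exact Or.inr (Or.inr ⟨Reachable.refl _, h1⟩)
        · exact Or.inl h2
        · exact Or.inr (Or.inr ⟨Reachable.refl _, h3⟩)
    · have hD : (G.deleteEdges {s(u,v)}).Adj a c := by
        rw [deleteEdges_adj]
        exact ⟨h, by simpa using he⟩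
      rcases ih with h1 | ⟨h2, h2'⟩ | ⟨h3, h3'⟩
      · exact Or.inl (hD.reachable.trans h1)
      · exact Or.inr (Or.inl ⟨hD.reachable.trans h2, h2'⟩)
      · exact Or.inr (Or.inr ⟨hD.reachable.trans h3, h3'⟩)

lemma reach_endpoint {G : SimpleGraph W} (hp : G.Preconnected) (u v a : W) :
    (G.deleteEdges {s(u,v)}).Reachable a u ∨ (G.deleteEdges {s(u,v)}).Reachable a v := by
  obtain ⟨p⟩ := hp a u
  rcases reach_delete_cases (u := u) (v := v) p with h | ⟨h, _⟩ | ⟨h, _⟩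
  exacts [Or.inl h, Or.inl h, Or.inr h]

lemma delete_connected {G : SimpleGraph W} (hc : G.Connected) {u v : W}
    (hr : (G.deleteEdges {s(u,v)}).Reachable u v) :
    (G.deleteEdges {s(u,v)}).Connected := by
  rw [connected_iff] at hc ⊢
  refine ⟨fun a b => ?_, hc.2⟩
  obtain ⟨p⟩ := hc.1 a b
  rcases reach_delete_cases (u := u) (v := v) p with h | ⟨h1, h2⟩ | ⟨h1, h2⟩
  · exact h
  · exact (h1.trans hr).trans h2
  · exact (h1.trans hr.symm).trans h2

lemma cross_lemma {K : SimpleGraph W} {P : W → Prop} :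
    ∀ {x y : W} (p : K.Walk x y), P x → ¬ P y →
      ∃ a b, K.Adj a b ∧ s(a, b) ∈ p.edges ∧ P a ∧ ¬ P b := by
  intro x y p
  induction p with
  | nil => intro h h'; exact absurd h h'
  | @cons x c y h q ih =>
    intro hx hy
    by_cases hc : P c
    · obtain ⟨a, b, h1, h2, h3, h4⟩ := ih hc hy
      exact ⟨a, b, h1, List.mem_cons_of_mem _ h2, h3, h4⟩
    · exact ⟨x, c, h, by simp, hx, hc⟩

lemma path_edge_sep [DecidableEq W] {G : SimpleGraph W} (hA : G.IsAcyclic) {a b : W} {p : G.Walk a b}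
    (hp : p.IsPath) {f : Sym2 W} (hf : f ∈ p.edges) :
    ¬ (G.deleteEdges {f}).Reachable a b := by
  rintro ⟨q⟩
  have hle : G.deleteEdges {f} ≤ G := deleteEdges_le _
  have hpq := hA.path_unique ⟨p, hp⟩ (q.mapLe hle).toPath
  have hf' : f ∈ ((q.mapLe hle).toPath : G.Walk a b).edges := by
    rw [← hpq]; exact hf
  have h2 : f ∈ (q.mapLe hle).edges := Walk.edges_toPath_subset _ hf'
  have h3 : f ∈ q.edges := by
    simpa [Walk.mapLe, Walk.edges_map, Walk.edges_mapLe_eq_edges, Sym2.map_id']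
      using h2
  have h4 := q.edges_subset_edgeSet h3
  rw [edgeSet_deleteEdges] at h4
  exact h4.2 rfl

lemma tree_swap [DecidableEq W] {T : SimpleGraph W} (hc : T.Connected) (hA : T.IsAcyclic)
    {u v x y : W} (huv : T.Adj u v) (hxy : x ≠ y)
    (hnr : ¬ (T.deleteEdges {s(u,v)}).Reachable x y) :
    (T.deleteEdges {s(u,v)} ⊔ edge x y).Connected ∧
    (T.deleteEdges {s(u,v)} ⊔ edge x y).IsAcyclic ∧
    (T.deleteEdges {s(u,v)} ⊔ edge x y).edgeSet = insert s(x,y) (T.edgeSet \ {s(u,v)}) := by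
  set D := T.deleteEdges {s(u,v)} with hD
  set T2 := D ⊔ edge x y with hT2
  have hDle : D ≤ T2 := le_sup_left
  have hes : T2.edgeSet = insert s(x,y) (T.edgeSet \ {s(u,v)}) := by
    rw [hT2, edgeSet_sup, hD, edgeSet_deleteEdges, edge_edgeSet_of_ne hxy,
      Set.union_singleton]
  have hxyT2 : T2.Adj x y := by
    refine (SimpleGraph.sup_adj _ _ _ _).mpr (Or.inr ?_)
    rw [edge_adj]
    exact ⟨Or.inl ⟨rfl, rfl⟩, hxy⟩
  have hreach : ∀ a, D.Reachable a u ∨ D.Reachable a v :=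
    fun a => reach_endpoint hc.preconnected u v a
  have huv2 : T2.Reachable u v := by
    rcases hreach x with hxu | hxv <;> rcases hreach y with hyu | hyv
    · exact absurd (hxu.trans hyu.symm) hnr
    · exact ((hxu.mono hDle).symm.trans hxyT2.reachable).trans (hyv.mono hDle)
    · exact ((hyu.mono hDle).symm.trans hxyT2.reachable.symm).trans (hxv.mono hDle)
    · exact absurd (hxv.trans hyv.symm) hnr
  have hconn : T2.Connected := by
    rw [connected_iff]
    refine ⟨fun a b => ?_, hc.nonempty⟩
    have key : ∀ z : W, T2.Reachable z u := by
      intro z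
      rcases hreach z with h | h
      · exact h.mono hDle
      · exact (h.mono hDle).trans huv2.symm
    exact (key a).trans (key b).symm
  refine ⟨hconn, ?_, hes⟩
  intro z c hcyc
  by_cases hmem : s(x, y) ∈ c.edges
  · have h1 := adj_and_reachable_delete_edges_iff_exists_cycle.mpr ⟨z, c, hcyc, hmem⟩
    have h2 : (T2 \ fromEdgeSet {s(x,y)}) ≤ D := by
      intro a b hab
      have hab' : T2.Adj a b ∧ s(a, b) ∉ ({s(x,y)} : Set (Sym2 W)) :=
        (deleteEdges_adj (G := T2) (s := {s(x,y)})).mp hab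
      rcases (SimpleGraph.sup_adj _ _ _ _).mp hab'.1 with h | h
      · exact h
      · exfalso
        rw [edge_adj] at h
        rcases h.1 with ⟨rfl, rfl⟩ | ⟨rfl, rfl⟩
        · exact hab'.2 rfl
        · exact hab'.2 (Sym2.eq_swap)
    exact hnr ((h1.2.mono h2))
  · have hsub : ∀ e ∈ c.edges, e ∈ T.edgeSet := by
      intro e hee
      have h1 := c.edges_subset_edgeSet hee
      rw [hes] at h1
      rcases h1 with h1 | h1
      · exact absurd (h1 ▸ hee) hmem
      · exact h1.1
    exact hA (c.transfer T hsub) (hcyc.transfer hsub)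

lemma weight_swap [Fintype W] (ω : Sym2 W → ℝ) {S T : SimpleGraph W} {e f : Sym2 W}
    (he : e ∈ T.edgeSet) (hf : f ∉ T.edgeSet)
    (hS : S.edgeSet = insert f (T.edgeSet \ {e})) :
    treeWeight S ω = treeWeight T ω - ω e + ω f := by
  classical
  have h1 : S.edgeSet.toFinite.toFinset = insert f (T.edgeSet.toFinite.toFinset.erase e) := by
    ext g
    simp only [Set.Finite.mem_toFinset, hS, Finset.mem_insert, Finset.mem_erase,
      Set.mem_insert_iff, Set.mem_diff, Set.mem_singleton_iff]
    tauto
  have hfe : f ∉ T.edgeSet.toFinite.toFinset.erase e := by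
    simp only [Finset.mem_erase, Set.Finite.mem_toFinset]
    tauto
  rw [treeWeight, treeWeight, h1, Finset.sum_insert hfe,
    Finset.sum_erase_eq_sub (by simpa using he)]
  ring

lemma exists_spanning_tree [Fintype W] {G : SimpleGraph W} (hG : G.Connected) :
    ∃ T, IsSpanningTree G T := by
  classical
  suffices h : ∀ n (G : SimpleGraph W), G.Connected →
      G.edgeSet.toFinite.toFinset.card ≤ n → ∃ T, IsSpanningTree G T from
    h _ G hG le_rfl
  intro n
  induction n with
  | zero =>
    intro G hc hcard
    by_cases hA : G.IsAcyclic
    · exact ⟨G, le_rfl, hc, hA⟩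
    · exfalso
      simp only [IsAcyclic] at hA
      push_neg at hA
      obtain ⟨z, c, hcyc⟩ := hA
      cases c with
      | nil => exact hcyc.ne_nil rfl
      | @cons _ b _ h q =>
        have hm : s(z, b) ∈ G.edgeSet.toFinite.toFinset := by
          simpa using h
        have := Finset.card_pos.mpr ⟨_, hm⟩
        omega
  | succ n ih =>
    intro G hc hcard
    by_cases hA : G.IsAcyclic
    · exact ⟨G, le_rfl, hc, hA⟩
    · simp only [IsAcyclic] at hA
      push_neg at hA
      obtain ⟨z, c, hcyc⟩ := hA
      cases c with
      | nil => exact absurd rfl hcyc.ne_nil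
      | @cons _ b _ h q =>
        have hmem : s(z, b) ∈ (Walk.cons h q).edges := by simp
        have hxy := adj_and_reachable_delete_edges_iff_exists_cycle.mpr
          ⟨z, Walk.cons h q, hcyc, hmem⟩
        have hDconn : (G.deleteEdges {s(z, b)}).Connected := delete_connected hc hxy.2
        have hcard' : (G.deleteEdges {s(z, b)}).edgeSet.toFinite.toFinset.card ≤ n := by
          have heq : (G.deleteEdges {s(z, b)}).edgeSet.toFinite.toFinset
              = G.edgeSet.toFinite.toFinset.erase s(z, b) := by
            ext g
            simp only [Set.Finite.mem_toFinset, edgeSet_deleteEdges, Finset.mem_erase,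
              Set.mem_diff, Set.mem_singleton_iff]
            tauto
          rw [heq, Finset.card_erase_of_mem (by simpa using h)]
          omega
        obtain ⟨T, h1, h2, h3⟩ := ih _ hDconn hcard'
        exact ⟨T, h1.trans (deleteEdges_le _), h2, h3⟩

lemma mst_cycle_property [Fintype W] [DecidableEq W] {H Tm : SimpleGraph W} {ω : Sym2 W → ℝ}
    (hM : IsMST H Tm ω) {u v x y : W} (huv : H.Adj u v)
    {p : Tm.Walk u v} (hp : p.IsPath) (hf : s(x, y) ∈ p.edges) :
    ω s(x, y) ≤ ω s(u, v) := by
  obtain ⟨⟨hle, hc, hA⟩, hmin⟩ := hM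
  by_cases heq : s(x, y) = s(u, v)
  · rw [heq]
  have hxyadj : Tm.Adj x y := p.adj_of_mem_edges hf
  have huvT : s(u, v) ∉ Tm.edgeSet := by
    intro hmem
    rw [mem_edgeSet] at hmem
    have hq : (Walk.cons hmem Walk.nil : Tm.Walk u v).IsPath := by
      simp [hmem.ne]
    have h1 := hA.path_unique ⟨p, hp⟩ ⟨Walk.cons hmem Walk.nil, hq⟩
    have h2 : p.edges = [s(u, v)] := by
      have := congrArg (fun q : Tm.Path u v => (q : Tm.Walk u v).edges) h1
      simpa using this
    rw [h2] at hf
    simp only [List.mem_singleton] at hf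
    exact heq hf
  have hnr := path_edge_sep hA hp hf
  obtain ⟨hcon, hacy, hes⟩ := tree_swap hc hA hxyadj huv.ne hnr
  have hSle : Tm.deleteEdges {s(x,y)} ⊔ edge u v ≤ H := by
    refine sup_le ((deleteEdges_le _).trans hle) ?_
    intro a b hab
    rw [edge_adj] at hab
    rcases hab.1 with ⟨rfl, rfl⟩ | ⟨rfl, rfl⟩
    · exact huv
    · exact huv.symm
  have hmin' := hmin _ ⟨hSle, hcon, hacy⟩
  have hw := weight_swap ω (p.edges_subset_edgeSet hf) huvT hes
  linarith

end Aux
/-- If the vertices of a connected weighted graph `G` are partitioned into clusters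
(by `cl`), each cluster inducing a connected subgraph with a minimum spanning tree
`T i`, then the union `U` of those spanning trees together with all edges of `G`
between different clusters contains a minimum spanning tree of `G`. -/
theorem mst_of_cluster_msts_union {V ι : Type*} [Fintype V] [DecidableEq ι] (G : SimpleGraph V)
    (w : Sym2 V → ℝ) (hG : G.Connected) (cl : V → ι)
    (T : ∀ i : ι, SimpleGraph {v : V | cl v = i})
    (hconn : ∀ i : ι, (G.induce {v : V | cl v = i}).Connected)
    (hT : ∀ i : ι, IsMST (G.induce {v : V | cl v = i}) (T i)
      (fun e => w (e.map Subtype.val))) :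
    ∃ Tmst : SimpleGraph V, IsMST G Tmst w ∧
      Tmst ≤ SimpleGraph.fromRel (fun u v =>
        (G.Adj u v ∧ cl u ≠ cl v) ∨
        ∃ h : cl u = cl v, (T (cl v)).Adj ⟨u, h⟩ ⟨v, rfl⟩) := by
  classical
  set U : SimpleGraph V := SimpleGraph.fromRel (fun u v =>
        (G.Adj u v ∧ cl u ≠ cl v) ∨
        ∃ h : cl u = cl v, (T (cl v)).Adj ⟨u, h⟩ ⟨v, rfl⟩) with hU
  have hTU : ∀ (i : ι) (a' b' : {v : V | cl v = i}), (T i).Adj a' b' → U.Adj ↑a' ↑b' := by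
    intro i a' b' h
    obtain ⟨a, ha⟩ := a'
    obtain ⟨b, hb⟩ := b'
    have hne : a ≠ b := fun hab => h.ne (Subtype.ext hab)
    simp only [Set.mem_setOf_eq] at ha hb
    subst hb
    rw [hU, fromRel_adj]
    exact ⟨hne, Or.inl (Or.inr ⟨ha, h⟩)⟩
  have key : ∀ n (T' : SimpleGraph V), IsSpanningTree G T' →
      ((T'.edgeSet \ U.edgeSet).toFinite.toFinset).card ≤ n →
      ∃ T'', IsSpanningTree G T'' ∧ T'' ≤ U ∧ treeWeight T'' w ≤ treeWeight T' w := by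
    intro n
    induction n with
    | zero =>
      intro T' hsp hcard
      refine ⟨T', hsp, ?_, le_rfl⟩
      by_contra hle
      obtain ⟨u, v, huvT', huvU⟩ : ∃ u v, T'.Adj u v ∧ ¬U.Adj u v := by
        by_contra hh
        push_neg at hh
        exact hle fun a b hab => hh a b hab
      have hm : s(u, v) ∈ (T'.edgeSet \ U.edgeSet).toFinite.toFinset := by
        simp only [Set.Finite.mem_toFinset, Set.mem_diff, mem_edgeSet]
        exact ⟨huvT', huvU⟩
      have := Finset.card_pos.mpr ⟨_, hm⟩
      omega
    | succ n ih =>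
      intro T' hsp hcard
      by_cases hle : T' ≤ U
      · exact ⟨T', hsp, hle, le_rfl⟩
      obtain ⟨hT'le, hT'conn, hT'acyc⟩ := hsp
      obtain ⟨u, v, huvT', huvU⟩ : ∃ u v, T'.Adj u v ∧ ¬U.Adj u v := by
        by_contra hh
        push_neg at hh
        exact hle fun a b hab => hh a b hab
      have huvG : G.Adj u v := hT'le huvT'
      have hne : u ≠ v := huvG.ne
      have hclu : cl u = cl v := by
        by_contra hcl
        exact huvU (by rw [hU, fromRel_adj]; exact ⟨hne, Or.inl (Or.inl ⟨huvG, hcl⟩)⟩)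
      obtain ⟨⟨hTle, hTconn, hTacyc⟩, hTmin⟩ := hT (cl v)
      obtain ⟨p0⟩ := hTconn.preconnected ⟨u, hclu⟩ ⟨v, rfl⟩
      set pth := p0.toPath with hpth
      set D := T'.deleteEdges {s(u, v)} with hDdef
      have hbr : ¬ D.Reachable u v := by
        have hbridge := (isAcyclic_iff_forall_adj_isBridge.mp hT'acyc) huvT'
        rw [isBridge_iff] at hbridge
        exact hbridge
      obtain ⟨a', b', hadjT, hfmem, hPa, hPb⟩ :=
        cross_lemma (P := fun z : {x : V | cl x = cl v} => D.Reachable u ↑z)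
          (pth : (T (cl v)).Walk ⟨u, hclu⟩ ⟨v, rfl⟩)
          (Reachable.refl u) hbr
      have haG : G.Adj ↑a' ↑b' := by
        have h1 := hTle hadjT
        simpa using h1
      have habne : (↑a' : V) ≠ ↑b' := fun hh => hadjT.ne (Subtype.ext hh)
      have hUab : U.Adj ↑a' ↑b' := hTU (cl v) a' b' hadjT
      have hnrab : ¬ D.Reachable ↑a' ↑b' := fun h => hPb (hPa.trans h)
      have hwle : w s(↑a', ↑b') ≤ w s(u, v) := by
        have hGiadj : (G.induce {x : V | cl x = cl v}).Adj ⟨u, hclu⟩ ⟨v, rfl⟩ := by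
          simpa using huvG
        have h2 := mst_cycle_property (hT (cl v)) hGiadj pth.2 hfmem
        simpa [Sym2.map_pair_eq] using h2
      have hab_ne_uv : s(↑a', ↑b') ≠ s(u, v) := by
        intro hh
        apply huvU
        have : s(u, v) ∈ U.edgeSet := hh ▸ ((mem_edgeSet _).mpr hUab)
        exact (mem_edgeSet _).mp this
      have hfT' : s(↑a', ↑b') ∉ T'.edgeSet := by
        intro hmem
        have hD : D.Adj ↑a' ↑b' := by
          rw [hDdef, deleteEdges_adj]
          exact ⟨(mem_edgeSet _).mp hmem, by simpa using hab_ne_uv⟩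
        exact hnrab hD.reachable
      obtain ⟨hcon, hacy, hes⟩ := tree_swap hT'conn hT'acyc huvT' habne hnrab
      have hedge : edge (↑a' : V) ↑b' ≤ G := by
        intro c d hcd
        rw [edge_adj] at hcd
        rcases hcd.1 with ⟨rfl, rfl⟩ | ⟨rfl, rfl⟩
        · exact haG
        · exact haG.symm
      have hT2sp : IsSpanningTree G (D ⊔ edge (↑a' : V) ↑b') :=
        ⟨sup_le ((deleteEdges_le _).trans hT'le) hedge, hcon, hacy⟩
      have hw2 := weight_swap w ((mem_edgeSet _).mpr huvT') hfT' hes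
      have hcard2 :
          (((D ⊔ edge (↑a' : V) ↑b').edgeSet \ U.edgeSet).toFinite.toFinset).card ≤ n := by
        have hsub : (D ⊔ edge (↑a' : V) ↑b').edgeSet \ U.edgeSet ⊆
            (T'.edgeSet \ U.edgeSet) \ {s(u, v)} := by
          intro g hg
          obtain ⟨hg1, hg2⟩ := hg
          rw [hes, Set.mem_insert_iff] at hg1
          rcases hg1 with rfl | hg1
          · exact absurd ((mem_edgeSet _).mpr hUab) hg2
          · exact ⟨⟨hg1.1, hg2⟩, hg1.2⟩
        have h1 : (((D ⊔ edge (↑a' : V) ↑b').edgeSet \ U.edgeSet).toFinite.toFinset) ⊆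
            ((T'.edgeSet \ U.edgeSet).toFinite.toFinset).erase s(u, v) := by
          intro g hg
          rw [Set.Finite.mem_toFinset] at hg
          have := hsub hg
          simp only [Finset.mem_erase, Set.Finite.mem_toFinset]
          exact ⟨this.2, this.1⟩
        have h2 := Finset.card_le_card h1
        have hm : s(u, v) ∈ (T'.edgeSet \ U.edgeSet).toFinite.toFinset := by
          simp only [Set.Finite.mem_toFinset, Set.mem_diff, mem_edgeSet]
          exact ⟨huvT', huvU⟩
        rw [Finset.card_erase_of_mem hm] at h2
        omega
      obtain ⟨T3, h3sp, h3U, h3w⟩ := ih (D ⊔ edge (↑a' : V) ↑b') hT2sp hcard2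
      refine ⟨T3, h3sp, h3U, ?_⟩
      have hstep : treeWeight (D ⊔ edge (↑a' : V) ↑b') w ≤ treeWeight T' w := by
        rw [hw2]; linarith only [hwle]
      linarith only [hstep, h3w]
  obtain ⟨T0, hT0⟩ := exists_spanning_tree hG
  obtain ⟨T1, h1, h1U, _⟩ := key _ T0 hT0 le_rfl
  obtain ⟨Tm, hTmS, hTmmin⟩ := Set.exists_min_image
    {X : SimpleGraph V | IsSpanningTree G X ∧ X ≤ U}
    (fun X => treeWeight X w) (Set.toFinite _) ⟨T1, h1, h1U⟩
  refine ⟨Tm, ⟨hTmS.1, ?_⟩, hTmS.2⟩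
  intro T' hT'
  obtain ⟨T'', h2, h2U, h2w⟩ := key _ T' hT' le_rfl
  exact le_trans (hTmmin T'' ⟨h2, h2U⟩) h2w
end

section
/- Let U be a connected weighted graph and let γ = (u_0, u_1, ..., u_m) be a path in U such that each internal vertex u_k (0 < k < m) has degree exactly 2 in U. Then every spanning tree of U contains all edges of γ except possibly one, and there exists a minimum spanning tree of U that contains all edges of γ except possibly a heaviest edge of γ. -/
open SimpleGraph

namespace ChainAux
variable {V : Type*}

lemma getVert_inj {G : SimpleGraph V} {u v : V} {p : G.Walk u v} (hp : p.IsPath) :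
    ∀ {i j : ℕ}, i ≤ p.length → j ≤ p.length → p.getVert i = p.getVert j → i = j := by
  induction p with
  | nil => intro i j hi hj _; simp [Walk.length_nil] at hi hj; omega
  | cons h q ih =>
    rw [Walk.cons_isPath_iff] at hp
    intro i j hi hj heq
    rcases i with _ | i <;> rcases j with _ | j
    · rfl
    · exfalso
      rw [Walk.getVert_zero, Walk.getVert_cons_succ] at heq
      exact hp.2 (Walk.mem_support_iff_exists_getVert.mpr ⟨j, heq.symm, by
        simpa [Nat.succ_le_succ_iff] using hj⟩)
    · exfalso
      rw [Walk.getVert_zero, Walk.getVert_cons_succ] at heq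
      exact hp.2 (Walk.mem_support_iff_exists_getVert.mpr ⟨i, heq, by
        simpa [Nat.succ_le_succ_iff] using hi⟩)
    · rw [Walk.getVert_cons_succ, Walk.getVert_cons_succ] at heq
      have := ih hp.1 (by simpa [Nat.succ_le_succ_iff] using hi)
        (by simpa [Nat.succ_le_succ_iff] using hj) heq
      omega

lemma mem_edges_iff' {G : SimpleGraph V} {u v : V} (p : G.Walk u v) {e : Sym2 V} :
    e ∈ p.edges ↔ ∃ i, i < p.length ∧ s(p.getVert i, p.getVert (i + 1)) = e := by
  rw [← Walk.mem_edges_toSubgraph]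
  induction e using Sym2.ind with
  | _ a b =>
    rw [Subgraph.mem_edgeSet, Walk.toSubgraph_adj_iff]
    constructor
    · rintro ⟨i, h1, h2⟩; exact ⟨i, h2, h1⟩
    · rintro ⟨i, h1, h2⟩; exact ⟨i, h2, h1⟩

lemma ek_inj {G : SimpleGraph V} {u v : V} {p : G.Walk u v} (hp : p.IsPath) {i j : ℕ}
    (hi : i < p.length) (hj : j < p.length)
    (h : s(p.getVert i, p.getVert (i + 1)) = s(p.getVert j, p.getVert (j + 1))) : i = j := by
  rw [Sym2.eq_iff] at h
  rcases h with ⟨h1, _⟩ | ⟨h1, h2⟩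
  · exact getVert_inj hp (by omega) (by omega) h1
  · have := getVert_inj hp (by omega) (by omega) h1
    have := getVert_inj hp (by omega) (by omega) h2
    omega

section
variable [Fintype V] [DecidableEq V] {U : SimpleGraph V} [DecidableRel U.Adj]
  {u₀ uₘ : V} {p : U.Walk u₀ uₘ}

lemma neighbor (hp : p.IsPath)
    (hdeg : ∀ v ∈ p.support, v ≠ u₀ → v ≠ uₘ → U.degree v = 2)
    {k : ℕ} (hk0 : 0 < k) (hkm : k < p.length) {b : V}
    (hadj : U.Adj (p.getVert k) b) :
    b = p.getVert (k - 1) ∨ b = p.getVert (k + 1) := by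
  have e1 : k - 1 + 1 = k := Nat.succ_pred_eq_of_pos hk0
  have h1 : U.Adj (p.getVert k) (p.getVert (k - 1)) := by
    have := p.adj_getVert_succ (i := k - 1) (by omega)
    rw [e1] at this; exact this.symm
  have h2 : U.Adj (p.getVert k) (p.getVert (k + 1)) := p.adj_getVert_succ hkm
  have hne : p.getVert (k - 1) ≠ p.getVert (k + 1) := by
    intro h
    have := getVert_inj hp (by omega) (by omega) h
    omega
  have hsup : p.getVert k ∈ p.support :=
    Walk.mem_support_iff_exists_getVert.mpr ⟨k, rfl, hkm.le⟩
  have hn0 : p.getVert k ≠ u₀ := by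
    intro h
    have : p.getVert k = p.getVert 0 := by rw [h, Walk.getVert_zero]
    have := getVert_inj hp (by omega) (by omega) this
    omega
  have hnm : p.getVert k ≠ uₘ := by
    intro h
    have : p.getVert k = p.getVert p.length := by rw [h, Walk.getVert_length]
    have := getVert_inj hp (by omega) (by omega) this
    omega
  have hd : U.degree (p.getVert k) = 2 := hdeg _ hsup hn0 hnm
  have hsubset : ({p.getVert (k - 1), p.getVert (k + 1)} : Finset V) ⊆
      U.neighborFinset (p.getVert k) := by
    intro x hx
    rcases Finset.mem_insert.mp hx with rfl | hx
    · exact (U.mem_neighborFinset _ _).mpr h1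
    · rw [Finset.mem_singleton] at hx; subst hx
      exact (U.mem_neighborFinset _ _).mpr h2
  have hcard : ({p.getVert (k - 1), p.getVert (k + 1)} : Finset V).card = 2 := by
    rw [Finset.card_insert_of_notMem (by simpa using hne), Finset.card_singleton]
  have heq : U.neighborFinset (p.getVert k) =
      ({p.getVert (k - 1), p.getVert (k + 1)} : Finset V) := by
    apply (Finset.eq_of_subset_of_card_le hsubset ?_).symm
    rw [hcard, ← hd, U.card_neighborFinset_eq_degree]
  have hb : b ∈ U.neighborFinset (p.getVert k) := (U.mem_neighborFinset _ _).mpr hadj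
  rw [heq] at hb
  simpa using hb


lemma trap (hp : p.IsPath)
    (hdeg : ∀ v ∈ p.support, v ≠ u₀ → v ≠ uₘ → U.degree v = 2)
    {H : SimpleGraph V} (hHU : H ≤ U) {i j : ℕ} (hij : i < j) (hjm : j < p.length)
    (hei : s(p.getVert i, p.getVert (i + 1)) ∉ H.edgeSet)
    (hej : s(p.getVert j, p.getVert (j + 1)) ∉ H.edgeSet) :
    ∀ {a b : V} (_ : H.Walk a b), (∃ k, i + 1 ≤ k ∧ k ≤ j ∧ a = p.getVert k) →
      ∃ k, i + 1 ≤ k ∧ k ≤ j ∧ b = p.getVert k := by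
  intro a b q
  induction q with
  | nil => exact id
  | @cons u x w hux q ih =>
    rintro ⟨k, hk1, hk2, rfl⟩
    have hUadj : U.Adj (p.getVert k) x := hHU hux
    have hedge : s(p.getVert k, x) ∈ H.edgeSet := H.mem_edgeSet.mpr hux
    rcases neighbor hp hdeg (by omega) (by omega) hUadj with hx | hx
    · subst hx
      have e1 : k - 1 + 1 = k := by omega
      have hmem : s(p.getVert (k - 1), p.getVert (k - 1 + 1)) ∈ H.edgeSet := by
        rw [e1, Sym2.eq_swap]; exact hedge
      have hki : k - 1 ≠ i := by
        rintro h; rw [h] at hmem; exact hei hmem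
      exact ih ⟨k - 1, by omega, by omega, rfl⟩
    · subst hx
      have hkj : k ≠ j := by
        rintro rfl; exact hej hedge
      exact ih ⟨k + 1, by omega, by omega, rfl⟩

lemma part1core (hp : p.IsPath)
    (hdeg : ∀ v ∈ p.support, v ≠ u₀ → v ≠ uₘ → U.degree v = 2)
    {H : SimpleGraph V} (hHU : H ≤ U) (hHc : H.Connected) {i j : ℕ} (hij : i < j)
    (hjm : j < p.length)
    (hei : s(p.getVert i, p.getVert (i + 1)) ∉ H.edgeSet)
    (hej : s(p.getVert j, p.getVert (j + 1)) ∉ H.edgeSet) : False := by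
  obtain ⟨q⟩ := hHc.preconnected (p.getVert (i + 1)) u₀
  obtain ⟨k, hk1, hk2, h0⟩ := trap hp hdeg hHU hij hjm hei hej q ⟨i + 1, le_rfl, by omega, rfl⟩
  have : p.getVert 0 = p.getVert k := by rw [Walk.getVert_zero]; exact h0
  have := getVert_inj hp (by omega) (by omega) this
  omega

end

lemma split_aux {G : SimpleGraph V} {x y : V} :
    ∀ {v z : V} (_ : G.Walk v z), (G \ fromEdgeSet {s(x, y)}).Reachable v z ∨
      ((G \ fromEdgeSet {s(x, y)}).Reachable v x ∨ (G \ fromEdgeSet {s(x, y)}).Reachable v y) := by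
  intro v z q
  induction q with
  | nil => exact Or.inl (Reachable.refl _)
  | @cons u a w hua q ih =>
    by_cases hfe : s(u, a) = s(x, y)
    · rw [Sym2.eq_iff] at hfe
      rcases hfe with ⟨rfl, rfl⟩ | ⟨rfl, rfl⟩
      · exact Or.inr (Or.inl (Reachable.refl _))
      · exact Or.inr (Or.inr (Reachable.refl _))
    · have hadj : (G \ fromEdgeSet {s(x, y)}).Adj u a := by
        rw [sdiff_adj]
        refine ⟨hua, ?_⟩
        rw [fromEdgeSet_adj]
        simp only [Set.mem_singleton_iff]
        tauto
      rcases ih with h' | h' | h'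
      · exact Or.inl (hadj.reachable.trans h')
      · exact Or.inr (Or.inl (hadj.reachable.trans h'))
      · exact Or.inr (Or.inr (hadj.reachable.trans h'))

lemma split {G : SimpleGraph V} {x y : V} (hG : G.Connected) (v : V) :
    (G \ fromEdgeSet {s(x, y)}).Reachable v x ∨ (G \ fromEdgeSet {s(x, y)}).Reachable v y := by
  obtain ⟨q⟩ := hG.preconnected v x
  rcases split_aux q with h | h
  · exact Or.inl h
  · exact h

lemma reach_patch {G H : SimpleGraph V} {x y : V} (hxy : H.Reachable x y)
    (hcov : ∀ a b, G.Adj a b → s(a, b) = s(x, y) ∨ H.Adj a b) :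
    ∀ {v w : V}, G.Reachable v w → H.Reachable v w := by
  intro v w hr
  obtain ⟨q⟩ := hr
  induction q with
  | nil => exact Reachable.refl _
  | @cons u a w hua q ih =>
    rcases hcov _ _ hua with he | ha
    · rw [Sym2.eq_iff] at he
      rcases he with ⟨rfl, rfl⟩ | ⟨rfl, rfl⟩
      · exact hxy.trans ih
      · exact hxy.symm.trans ih
    · exact ha.reachable.trans ih

lemma exists_st [Fintype V] [DecidableEq V] {U : SimpleGraph V} (hU : U.Connected) :
    ∃ T, IsSpanningTree U T := by
  classical
  obtain ⟨T, hTmem, hTmin⟩ := Set.exists_min_image {H : SimpleGraph V | H ≤ U ∧ H.Connected}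
    (fun H => H.edgeSet.toFinite.toFinset.card) (Set.toFinite _) ⟨U, le_rfl, hU⟩
  refine ⟨T, hTmem.1, hTmem.2, ?_⟩
  rw [isAcyclic_iff_forall_edge_isBridge]
  intro e he
  induction e using Sym2.ind with
  | _ a b =>
    by_contra hbr
    rw [isBridge_iff] at hbr
    push_neg at hbr
    have hr : (T \ fromEdgeSet {s(a, b)}).Reachable a b := hbr
    have hle : T \ fromEdgeSet {s(a, b)} ≤ T := sdiff_le
    have hconn : (T \ fromEdgeSet {s(a, b)}).Connected := by
      rw [connected_iff]
      refine ⟨fun v w => reach_patch hr (fun c d hcd => ?_) (hTmem.2.preconnected v w),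
        hU.nonempty⟩
      by_cases hcd' : s(c, d) = s(a, b)
      · exact Or.inl hcd'
      · refine Or.inr ?_
        rw [sdiff_adj]
        refine ⟨hcd, ?_⟩
        rw [fromEdgeSet_adj]
        simp only [Set.mem_singleton_iff]
        tauto
    have hsub : (T \ fromEdgeSet {s(a, b)}).edgeSet = T.edgeSet \ {s(a, b)} := by
      rw [edgeSet_sdiff, edgeSet_fromEdgeSet, edgeSet_sdiff_sdiff_isDiag]
    have hcard : (T \ fromEdgeSet {s(a, b)}).edgeSet.toFinite.toFinset.card <
        T.edgeSet.toFinite.toFinset.card := by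
      apply Finset.card_lt_card
      rw [Set.Finite.toFinset_ssubset_toFinset, hsub]
      exact Set.sdiff_singleton_ssubset.mpr he
    have := hTmin _ ⟨hle.trans hTmem.1, hconn⟩
    omega

section
variable [Fintype V] [DecidableEq V] {U : SimpleGraph V} [DecidableRel U.Adj]
  {u₀ uₘ : V} {p : U.Walk u₀ uₘ}

lemma exchange (w : Sym2 V → ℝ) (hU : U.Connected) (hp : p.IsPath)
    (hdeg : ∀ v ∈ p.support, v ≠ u₀ → v ≠ uₘ → U.degree v = 2)
    {T₀ : SimpleGraph V} (hT₀ : IsMST U T₀ w) {i j : ℕ} (hi : i < p.length)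
    (hj : j < p.length) (hij : i ≠ j)
    (he : s(p.getVert i, p.getVert (i + 1)) ∉ T₀.edgeSet)
    (hfT : s(p.getVert j, p.getVert (j + 1)) ∈ T₀.edgeSet)
    (hwef : w s(p.getVert i, p.getVert (i + 1)) ≤ w s(p.getVert j, p.getVert (j + 1)))
    (hmiss : ∀ g ∈ p.edges, g ∉ T₀.edgeSet → g = s(p.getVert i, p.getVert (i + 1))) :
    ∃ T, IsMST U T w ∧ ∀ e' ∈ p.edges, e' ∉ T.edgeSet →
      e' = s(p.getVert j, p.getVert (j + 1)) := by
  classical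
  obtain ⟨hT₀U, hT₀c, hT₀ac⟩ := hT₀.1
  set e : Sym2 V := s(p.getVert i, p.getVert (i + 1)) with hedef
  set f : Sym2 V := s(p.getVert j, p.getVert (j + 1)) with hfdef
  have hef : e ≠ f := fun h => he (h ▸ hfT)
  have heU : e ∈ U.edgeSet := p.edges_subset_edgeSet ((mem_edges_iff' p).mpr ⟨i, hi, rfl⟩)
  set H : SimpleGraph V := T₀ \ fromEdgeSet {f} with hHdef
  set T' : SimpleGraph V := fromEdgeSet (insert e (T₀.edgeSet \ {f})) with hT'def
  have hHedges : H.edgeSet = T₀.edgeSet \ {f} := by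
    rw [hHdef, edgeSet_sdiff, edgeSet_fromEdgeSet, edgeSet_sdiff_sdiff_isDiag]
  have hT'edges : T'.edgeSet = insert e (T₀.edgeSet \ {f}) := by
    rw [hT'def, edgeSet_fromEdgeSet]
    ext g
    simp only [Set.mem_diff, Set.mem_insert_iff, Set.mem_setOf_eq, Set.mem_singleton_iff]
    constructor
    · exact fun h => h.1
    · rintro (rfl | ⟨hg, hgf⟩)
      · exact ⟨Or.inl rfl, U.not_isDiag_of_mem_edgeSet heU⟩
      · exact ⟨Or.inr ⟨hg, hgf⟩, T₀.not_isDiag_of_mem_edgeSet hg⟩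
  have hHU : H ≤ U := sdiff_le.trans hT₀U
  have hHT' : H ≤ T' := by
    rw [← edgeSet_subset_edgeSet, hHedges, hT'edges]
    exact Set.subset_insert _ _
  have hT'U : T' ≤ U := by
    rw [← edgeSet_subset_edgeSet, hT'edges]
    rw [Set.insert_subset_iff]
    exact ⟨heU, (Set.diff_subset.trans (edgeSet_subset_edgeSet.mpr hT₀U))⟩
  have heH : e ∉ H.edgeSet := by rw [hHedges]; exact fun h => he h.1
  have hfH : f ∉ H.edgeSet := by rw [hHedges]; exact fun h => h.2 rfl
  -- chain reachability in H along path edges avoiding indices i and j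
  have hchain : ∀ k l : ℕ, k ≤ l → l ≤ p.length → (∀ t, k ≤ t → t < l → t ≠ i ∧ t ≠ j) →
      H.Reachable (p.getVert k) (p.getVert l) := by
    intro k l hkl
    induction l, hkl using Nat.le_induction with
    | base => intro _ _; exact Reachable.refl _
    | succ l hkl ih =>
      intro hlm havoid
      have hrl : H.Reachable (p.getVert k) (p.getVert l) :=
        ih (by omega) (fun t ht1 ht2 => havoid t ht1 (by omega))
      have hti : l ≠ i ∧ l ≠ j := havoid l hkl (by omega)
      have hmem : s(p.getVert l, p.getVert (l + 1)) ∈ p.edges :=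
        (mem_edges_iff' p).mpr ⟨l, by omega, rfl⟩
      have hT : s(p.getVert l, p.getVert (l + 1)) ∈ T₀.edgeSet := by
        by_contra h
        exact hti.1 (ek_inj hp (by omega) hi (hmiss _ hmem h))
      have hnf : s(p.getVert l, p.getVert (l + 1)) ≠ f := by
        intro h
        exact hti.2 (ek_inj hp (by omega) hj h)
      have : s(p.getVert l, p.getVert (l + 1)) ∈ H.edgeSet := by
        rw [hHedges]; exact ⟨hT, hnf⟩
      exact hrl.trans (H.mem_edgeSet.mp this).reachable
  have hsplit : ∀ v, H.Reachable v (p.getVert j) ∨ H.Reachable v (p.getVert (j + 1)) :=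
    fun v => split hT₀c v
  -- main reachability facts
  have key : ¬H.Reachable (p.getVert i) (p.getVert (i + 1)) ∧
      H.Reachable (p.getVert j) (p.getVert (i + 1)) ∧
      H.Reachable (p.getVert i) (p.getVert (j + 1)) := by
    rcases lt_or_gt_of_ne hij with hlt | hlt
    · have hF1 : H.Reachable (p.getVert (i + 1)) (p.getVert j) :=
        hchain (i + 1) j (by omega) (by omega) (fun t ht1 ht2 => ⟨by omega, by omega⟩)
      have hR1 : ¬H.Reachable (p.getVert i) (p.getVert (i + 1)) := by
        intro hr
        obtain ⟨q⟩ := hr.symm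
        obtain ⟨k, hk1, hk2, h0⟩ := trap hp hdeg hHU hlt hj heH hfH q ⟨i + 1, le_rfl, by omega, rfl⟩
        have := getVert_inj hp (by omega) (by omega) h0
        omega
      refine ⟨hR1, hF1.symm, ?_⟩
      rcases hsplit (p.getVert i) with h | h
      · exact absurd (h.trans (hF1.symm)) hR1
      · exact h
    · have hF1 : H.Reachable (p.getVert (j + 1)) (p.getVert i) :=
        hchain (j + 1) i (by omega) (by omega) (fun t ht1 ht2 => ⟨by omega, by omega⟩)
      have hR1 : ¬H.Reachable (p.getVert i) (p.getVert (i + 1)) := by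
        intro hr
        obtain ⟨q⟩ := (hF1.trans hr)
        obtain ⟨k, hk1, hk2, h0⟩ := trap hp hdeg hHU hlt hi hfH heH q ⟨j + 1, le_rfl, by omega, rfl⟩
        have := getVert_inj hp (by omega) (by omega) h0
        omega
      refine ⟨hR1, ?_, hF1.symm⟩
      rcases hsplit (p.getVert (i + 1)) with h | h
      · exact h.symm
      · exact absurd (hF1.symm.trans h.symm) hR1
  obtain ⟨hR1, hA1, hA2⟩ := key
  have heT' : e ∈ T'.edgeSet := by rw [hT'edges]; exact Set.mem_insert _ _
  have hT'adj : T'.Adj (p.getVert i) (p.getVert (i + 1)) := T'.mem_edgeSet.mp heT'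
  have hR2 : T'.Reachable (p.getVert j) (p.getVert (j + 1)) :=
    ((hA1.mono hHT').trans hT'adj.symm.reachable).trans (hA2.mono hHT')
  have hT'conn : T'.Connected := by
    rw [connected_iff]
    have hto : ∀ v, T'.Reachable v (p.getVert j) := by
      intro v
      rcases hsplit v with h | h
      · exact h.mono hHT'
      · exact (h.mono hHT').trans hR2.symm
    exact ⟨fun v w' => (hto v).trans (hto w').symm, hU.nonempty⟩
  have hT'ac : T'.IsAcyclic := by
    intro v c hc
    by_cases hce : e ∈ c.edges
    · have hkey := (adj_and_reachable_delete_edges_iff_exists_cycle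
        (G := T') (v := p.getVert i) (w := p.getVert (i + 1))).mpr ⟨v, c, hc, hce⟩
      have hle2 : T' \ fromEdgeSet {e} ≤ H := by
        rw [← edgeSet_subset_edgeSet, edgeSet_sdiff, hT'edges, hHedges, edgeSet_fromEdgeSet]
        rintro g ⟨hg, hgd⟩
        simp only [Set.mem_diff, Set.mem_singleton_iff, Set.mem_setOf_eq, not_and, not_not] at hgd
        rcases hg with rfl | hg
        · exact absurd (hgd rfl) (U.not_isDiag_of_mem_edgeSet heU)
        · exact hg
      exact hR1 (hkey.2.mono hle2)
    · have hsub : ∀ g ∈ c.edges, g ∈ T₀.edgeSet := by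
        intro g hg
        have := c.edges_subset_edgeSet hg
        rw [hT'edges] at this
        rcases this with rfl | hgm
        · exact absurd hg hce
        · exact hgm.1
      exact hT₀ac (c.transfer T₀ hsub) (hc.transfer hsub)
  have hfA : f ∈ T₀.edgeSet.toFinite.toFinset := by
    rw [Set.Finite.mem_toFinset]; exact hfT
  have heA : e ∉ (T₀.edgeSet.toFinite.toFinset.erase f) := by
    rw [Finset.mem_erase, Set.Finite.mem_toFinset]
    exact fun h => he h.2
  have hA'eq : T'.edgeSet.toFinite.toFinset = insert e (T₀.edgeSet.toFinite.toFinset.erase f) := by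
    ext g
    rw [Set.Finite.mem_toFinset, hT'edges, Finset.mem_insert, Finset.mem_erase,
      Set.Finite.mem_toFinset]
    constructor
    · rintro (rfl | ⟨hg, hgf⟩)
      · exact Or.inl rfl
      · exact Or.inr ⟨hgf, hg⟩
    · rintro (rfl | ⟨hgf, hg⟩)
      · exact Or.inl rfl
      · exact Or.inr ⟨hg, hgf⟩
  have hweight : treeWeight T' w ≤ treeWeight T₀ w := by
    unfold treeWeight
    rw [hA'eq, Finset.sum_insert heA, Finset.sum_erase_eq_sub hfA]
    linarith
  have hT'mst : IsMST U T' w :=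
    ⟨⟨hT'U, hT'conn, hT'ac⟩, fun T'' hT'' => hweight.trans (hT₀.2 T'' hT'')⟩
  refine ⟨T', hT'mst, ?_⟩
  intro e' he'p he'T'
  by_contra he'f
  apply he'T'
  rw [hT'edges]
  by_cases he'e : e' = e
  · exact Or.inl he'e
  · have : e' ∈ T₀.edgeSet := by
      by_contra h
      exact he'e (hmiss e' he'p h)
    exact Or.inr ⟨this, he'f⟩

end
end ChainAux

/-- Let `γ = (u₀, …, u_m)` be a path in a connected weighted graph `U` all of whose
internal vertices have degree exactly 2 in `U`.  Then every spanning tree of `U`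
contains all edges of `γ` except possibly one, and there is a minimum spanning tree
of `U` containing all edges of `γ` except possibly a heaviest edge of `γ`. -/
theorem chain_in_spanning_trees {V : Type*} [Fintype V] [DecidableEq V]
    (U : SimpleGraph V) [DecidableRel U.Adj] (w : Sym2 V → ℝ) (hU : U.Connected)
    (u₀ uₘ : V) (p : U.Walk u₀ uₘ) (hp : p.IsPath)
    (hdeg : ∀ v ∈ p.support, v ≠ u₀ → v ≠ uₘ → U.degree v = 2) :
    (∀ T : SimpleGraph V, IsSpanningTree U T →
      ∀ e ∈ p.edges, ∀ f ∈ p.edges,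
        e ∉ T.edgeSet → f ∉ T.edgeSet → e = f) ∧
    (∃ T : SimpleGraph V, IsMST U T w ∧
      ∀ e ∈ p.edges, e ∉ T.edgeSet → ∀ f ∈ p.edges, w f ≤ w e) := by
  classical
  have h1 : ∀ T : SimpleGraph V, IsSpanningTree U T →
      ∀ e ∈ p.edges, ∀ f ∈ p.edges, e ∉ T.edgeSet → f ∉ T.edgeSet → e = f := by
    rintro T ⟨hTU, hTc, _⟩ e he f hf heT hfT
    by_contra hne
    obtain ⟨i, hi, rfl⟩ := (ChainAux.mem_edges_iff' p).mp he
    obtain ⟨j, hj, rfl⟩ := (ChainAux.mem_edges_iff' p).mp hf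
    have hij : i ≠ j := fun h => hne (by rw [h])
    rcases lt_or_gt_of_ne hij with h | h
    · exact ChainAux.part1core hp hdeg hTU hTc h hj heT hfT
    · exact ChainAux.part1core hp hdeg hTU hTc h hi hfT heT
  refine ⟨h1, ?_⟩
  obtain ⟨Ts, hTs⟩ := ChainAux.exists_st hU
  obtain ⟨T₀, hT₀mem, hT₀min⟩ := Set.exists_min_image {T : SimpleGraph V | IsSpanningTree U T}
    (treeWeight · w) (Set.toFinite _) ⟨Ts, hTs⟩
  have hmst : IsMST U T₀ w := ⟨hT₀mem, fun T' h => hT₀min T' h⟩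
  by_cases hgood : ∀ e' ∈ p.edges, e' ∉ T₀.edgeSet → ∀ f' ∈ p.edges, w f' ≤ w e'
  · exact ⟨T₀, hmst, hgood⟩
  push_neg at hgood
  obtain ⟨e, he, heT, f', hf', hwlt⟩ := hgood
  obtain ⟨f, hf, hfmax⟩ := Set.exists_max_image {g | g ∈ p.edges} w (Set.toFinite _) ⟨e, he⟩
  have hef : e ≠ f := by rintro rfl; exact absurd (hfmax f' hf') (not_le.mpr hwlt)
  have hfT : f ∈ T₀.edgeSet := by
    by_contra h
    exact hef (h1 T₀ hT₀mem e he f hf heT h)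
  obtain ⟨i, hi, rfl⟩ := (ChainAux.mem_edges_iff' p).mp he
  obtain ⟨j, hj, rfl⟩ := (ChainAux.mem_edges_iff' p).mp hf
  have hij : i ≠ j := fun h => hef (by rw [h])
  have hmiss : ∀ g ∈ p.edges, g ∉ T₀.edgeSet → g = s(p.getVert i, p.getVert (i + 1)) :=
    fun g hg hgT => h1 T₀ hT₀mem g hg _ he hgT heT
  obtain ⟨T, hTmst, hTmiss⟩ := ChainAux.exchange w hU hp hdeg hmst hi hj hij heT hfT
    (hfmax _ he) hmiss
  refine ⟨T, hTmst, ?_⟩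
  intro e' he'p he'T
  rw [hTmiss e' he'p he'T]
  intro f'' hf''
  exact hfmax f'' hf''
end

section
/- Let G be a directed graph with non-negative edge weights and let Q be a set of vertices such that every edge between Q and its complement is incident (on the Q side) to a vertex of ∂Q. Define G* to be the graph obtained from G by deleting the interior vertices Q \ ∂Q and adding, for each ordered pair (u,v) of distinct vertices of ∂Q, an edge of weight δ_{G(Q)}(u,v) (the distance from u to v in the subgraph induced by Q). Then for every vertex s and every vertex t not in Q \ ∂Q, δ_{G*}(s,t) = δ_G(s,t). -/
open scoped ENNReal NNReal

/-- Total weight of the walk starting at `x` and continuing through the vertices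
of `l`. -/
noncomputable def walkCost {V : Type*} (w : V → V → ℝ≥0∞) : V → List V → ℝ≥0∞
  | _, [] => 0
  | x, y :: l => w x y + walkCost w y l

/-- Shortest-path distance from `x` to `y` in the directed graph with edge
relation `E` and edge weights `w` (`∞` if `y` is not reachable from `x`). -/
noncomputable def pathDist {V : Type*} (E : V → V → Prop) (w : V → V → ℝ≥0∞)
    (x y : V) : ℝ≥0∞ :=
  ⨅ (l : List V) (_ : List.Chain E x l ∧
      (x :: l).getLast (List.cons_ne_nil x l) = y),
    walkCost w x l

/-- The boundary of a vertex set `Q`: the vertices of `Q` having an edge to or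
from a vertex outside `Q`. -/
def bdry {V : Type*} (E : V → V → Prop) (Q : Set V) : Set V :=
  {v ∈ Q | ∃ u, u ∉ Q ∧ (E u v ∨ E v u)}

/-- Edge relation of the graph `G*`: the interior vertices `Q \ ∂Q` are deleted,
and for each ordered pair of distinct boundary vertices a new edge is added. -/
def starRel {V : Type*} (E : V → V → Prop) (Q : Set V) (u v : V) : Prop :=
  (E u v ∧ u ∉ Q \ bdry E Q ∧ v ∉ Q \ bdry E Q) ∨
    (u ∈ bdry E Q ∧ v ∈ bdry E Q ∧ u ≠ v)

-- Edge weights of `G*`: the new edge from a boundary vertex `u` to a boundary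
-- vertex `v` has weight `δ_{G(Q)}(u,v)`; parallel edges keep the minimum weight.
open Classical in
noncomputable def starWeight {V : Type*} (E : V → V → Prop) (Q : Set V)
    (w : V → V → ℝ≥0) (u v : V) : ℝ≥0∞ :=
  if u ∈ bdry E Q ∧ v ∈ bdry E Q ∧ u ≠ v then
    (if E u v then
      min (w u v : ℝ≥0∞)
        (pathDist (fun a b => E a b ∧ a ∈ Q ∧ b ∈ Q) (fun a b => (w a b : ℝ≥0∞)) u v)
    else pathDist (fun a b => E a b ∧ a ∈ Q ∧ b ∈ Q) (fun a b => (w a b : ℝ≥0∞)) u v)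
  else (w u v : ℝ≥0∞)

section Aux
variable {V : Type*} {E : V → V → Prop} {w : V → V → ℝ≥0∞}

lemma pathDist_le_walkCost (x : V) (l : List V) (hc : List.Chain E x l) :
    pathDist E w x ((x :: l).getLast (List.cons_ne_nil x l)) ≤ walkCost w x l :=
  iInf₂_le l ⟨hc, rfl⟩

lemma pathDist_self (x : V) : pathDist E w x x = 0 := by
  refine le_antisymm ?_ (zero_le)
  simpa [walkCost] using pathDist_le_walkCost (w := w) x [] List.Chain.nil

lemma pathDist_le_edge {x y : V} (h : E x y) : pathDist E w x y ≤ w x y := by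
  simpa [walkCost] using
    pathDist_le_walkCost (w := w) x [y] (List.chain_cons.mpr ⟨h, List.Chain.nil⟩)

lemma pathDist_cons {x y : V} (h : E x y) (z : V) :
    pathDist E w x z ≤ w x y + pathDist E w y z := by
  conv_rhs => rw [pathDist, ENNReal.add_iInf]
  refine le_iInf fun l => ?_
  conv_rhs => rw [ENNReal.add_iInf]
  refine le_iInf fun hl => ?_
  have hc : List.Chain E x (y :: l) := List.chain_cons.mpr ⟨h, hl.1⟩
  have hlast : (x :: y :: l).getLast (List.cons_ne_nil _ _) = z := by
    rw [List.getLast_cons (List.cons_ne_nil _ _)]; exact hl.2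
  have := iInf₂_le (f := fun (l' : List V) (_ : List.Chain E x l' ∧
      (x :: l').getLast (List.cons_ne_nil x l') = z) => walkCost w x l')
    (y :: l) ⟨hc, hlast⟩
  simpa [walkCost] using (show pathDist E w x z ≤ walkCost w x (y :: l) from this)

lemma pathDist_prepend (z : V) : ∀ (l : List V) (x : V), List.Chain E x l →
    pathDist E w x z ≤ walkCost w x l +
      pathDist E w ((x :: l).getLast (List.cons_ne_nil x l)) z := by
  intro l
  induction l with
  | nil => intro x _; simp [walkCost]
  | cons y l' ih =>
      intro x hc
      obtain ⟨hxy, hc'⟩ := List.chain_cons.mp hc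
      calc pathDist E w x z ≤ w x y + pathDist E w y z := pathDist_cons hxy z
        _ ≤ w x y + (walkCost w y l' +
            pathDist E w ((y :: l').getLast (List.cons_ne_nil _ _)) z) :=
          add_le_add_right (ih y hc') _
        _ = walkCost w x (y :: l') +
            pathDist E w ((x :: y :: l').getLast (List.cons_ne_nil _ _)) z := by
          rw [List.getLast_cons (List.cons_ne_nil _ _)]
          simp [walkCost, add_assoc]

lemma pathDist_triangle (x y z : V) :
    pathDist E w x z ≤ pathDist E w x y + pathDist E w y z := by
  conv_rhs => rw [pathDist, ENNReal.iInf_add]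
  refine le_iInf fun l => ?_
  conv_rhs => rw [ENNReal.iInf_add]
  refine le_iInf fun hl => ?_
  have := pathDist_prepend (w := w) z l x hl.1
  rwa [hl.2] at this

lemma pathDist_mono {E' : V → V → Prop} (h : ∀ a b, E' a b → E a b) (x y : V) :
    pathDist E w x y ≤ pathDist E' w x y := by
  refine le_iInf₂ fun l hl => iInf₂_le l ⟨List.IsChain.imp (fun a b => h a b) hl.1, hl.2⟩

end Aux

section Star
variable {V : Type*} {E : V → V → Prop} {Q : Set V} {w : V → V → ℝ≥0}

lemma starWeight_le_edge {u v : V} (h : E u v) :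
    starWeight E Q w u v ≤ (w u v : ℝ≥0∞) := by
  unfold starWeight
  split_ifs with h1
  · exact min_le_left _ _
  · exact le_rfl

lemma starWeight_le_pathDistQ {u v : V} (hu : u ∈ bdry E Q) (hv : v ∈ bdry E Q)
    (huv : u ≠ v) :
    starWeight E Q w u v ≤
      pathDist (fun a b => E a b ∧ a ∈ Q ∧ b ∈ Q) (fun a b => (w a b : ℝ≥0∞)) u v := by
  unfold starWeight
  split_ifs with h1 h2
  · exact min_le_right _ _
  · exact le_rfl
  · exact absurd ⟨hu, hv, huv⟩ h1

lemma pathDist_le_starWeight {u v : V} (h : starRel E Q u v) :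
    pathDist E (fun a b => (w a b : ℝ≥0∞)) u v ≤ starWeight E Q w u v := by
  have hsub : pathDist E (fun a b => (w a b : ℝ≥0∞)) u v ≤
      pathDist (fun a b => E a b ∧ a ∈ Q ∧ b ∈ Q) (fun a b => (w a b : ℝ≥0∞)) u v :=
    pathDist_mono (fun a b hab => hab.1) u v
  unfold starWeight
  split_ifs with h1 h2
  · exact le_min (pathDist_le_edge h2) hsub
  · exact hsub
  · rcases h with h | h
    · exact pathDist_le_edge h.1
    · exact absurd h h1

end Star

/-- Replacing the interior of a cluster `Q` by shortest-path edges between its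
boundary vertices preserves all distances between vertices outside the
interior. -/
theorem star_graph_preserves_distances {V : Type*} [Fintype V]
    (E : V → V → Prop) (w : V → V → ℝ≥0) (Q : Set V)
    (hQ : ∀ x y, E x y →
      ((x ∉ Q ∧ y ∈ Q) → y ∈ bdry E Q) ∧ ((x ∈ Q ∧ y ∉ Q) → x ∈ bdry E Q))
    (s t : V) (hs : s ∉ Q \ bdry E Q) (ht : t ∉ Q \ bdry E Q) :
    pathDist (starRel E Q) (starWeight E Q w) s t =
      pathDist E (fun a b => (w a b : ℝ≥0∞)) s t := by
  classical
  set wE : V → V → ℝ≥0∞ := fun a b => (w a b : ℝ≥0∞) with hwE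
  set EQ : V → V → Prop := fun a b => E a b ∧ a ∈ Q ∧ b ∈ Q with hEQ
  set D : V → V → ℝ≥0∞ := pathDist (starRel E Q) (starWeight E Q w) with hD
  set pdQ : V → V → ℝ≥0∞ := pathDist EQ wE with hpdQ
  have hswQ : ∀ u v : V, u ∈ bdry E Q → v ∈ bdry E Q → u ≠ v →
      starWeight E Q w u v ≤ pdQ u v := fun u v hu hv huv =>
    starWeight_le_pathDistQ hu hv huv
  -- Key induction for the ≤ direction
  have key : ∀ (l : List V) (x : V), List.Chain E x l →
      (x :: l).getLast (List.cons_ne_nil x l) = t →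
      ((x ∉ Q \ bdry E Q → D x t ≤ walkCost wE x l) ∧
       (x ∈ Q → (⨅ b ∈ bdry E Q, pdQ x b + D b t) ≤ walkCost wE x l)) := by
    intro l
    induction l with
    | nil =>
        intro x _ hlast
        simp only [List.getLast_singleton] at hlast
        subst hlast
        constructor
        · intro _
          simp [hD, pathDist_self, walkCost]
        · intro hx
          have hbd : x ∈ bdry E Q := by
            by_contra hb
            exact ht ⟨hx, hb⟩
          have : (⨅ b ∈ bdry E Q, pdQ x b + D b x) ≤ pdQ x x + D x x :=
            iInf₂_le x hbd
          simpa [walkCost, hD, hpdQ, pathDist_self] using this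
    | cons y l' ih =>
        intro x hc hlast
        obtain ⟨hxy, hc'⟩ := List.chain_cons.mp hc
        rw [List.getLast_cons (List.cons_ne_nil _ _)] at hlast
        obtain ⟨ihA, ihB⟩ := ih y hc' hlast
        have hwalk : walkCost wE x (y :: l') = wE x y + walkCost wE y l' := rfl
        constructor
        · intro hx
          by_cases hy : y ∈ Q \ bdry E Q
          · -- y is interior
            have hxQ : x ∈ Q := by
              by_contra hxQ
              exact hy.2 ((hQ x y hxy).1 ⟨hxQ, hy.1⟩)
            have hxbd : x ∈ bdry E Q := by
              by_contra hb
              exact hx ⟨hxQ, hb⟩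
            have hB := ihB hy.1
            have step : D x t ≤ wE x y + ⨅ b ∈ bdry E Q, (pdQ y b + D b t) := by
              rw [ENNReal.add_iInf]
              refine le_iInf fun b => ?_
              rw [ENNReal.add_iInf]
              refine le_iInf fun hb => ?_
              by_cases hbx : b = x
              · subst hbx
                rw [← add_assoc]
                exact le_add_self
              · have hrel : starRel E Q x b :=
                  Or.inr ⟨hxbd, hb, fun hh => hbx hh.symm⟩
                calc D x t ≤ starWeight E Q w x b + D b t := pathDist_cons hrel t
                  _ ≤ pdQ x b + D b t :=
                    add_le_add_left (hswQ x b hxbd hb fun hh => hbx hh.symm) _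
                  _ ≤ (wE x y + pdQ y b) + D b t :=
                    add_le_add_left (pathDist_cons ⟨hxy, hxQ, hy.1⟩ b) _
                  _ = wE x y + (pdQ y b + D b t) := add_assoc _ _ _
            calc D x t ≤ wE x y + ⨅ b ∈ bdry E Q, (pdQ y b + D b t) := step
              _ ≤ wE x y + walkCost wE y l' := add_le_add_right hB _
              _ = walkCost wE x (y :: l') := hwalk.symm
          · have hrel : starRel E Q x y := Or.inl ⟨hxy, hx, hy⟩
            calc D x t ≤ starWeight E Q w x y + D y t := pathDist_cons hrel t
              _ ≤ wE x y + walkCost wE y l' :=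
                add_le_add (starWeight_le_edge hxy) (ihA hy)
              _ = walkCost wE x (y :: l') := hwalk.symm
        · intro hxQ
          by_cases hy : y ∈ Q
          · have hB := ihB hy
            calc (⨅ b ∈ bdry E Q, pdQ x b + D b t)
                ≤ ⨅ b ∈ bdry E Q, (wE x y + (pdQ y b + D b t)) := by
                  refine le_iInf₂ fun b hb => (iInf₂_le b hb).trans ?_
                  calc pdQ x b + D b t ≤ (wE x y + pdQ y b) + D b t :=
                      add_le_add_left (pathDist_cons ⟨hxy, hxQ, hy⟩ b) _
                    _ = wE x y + (pdQ y b + D b t) := add_assoc _ _ _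
              _ = wE x y + ⨅ b ∈ bdry E Q, (pdQ y b + D b t) := by
                  rw [ENNReal.add_iInf]
                  exact iInf_congr fun b => (ENNReal.add_iInf).symm
              _ ≤ wE x y + walkCost wE y l' := add_le_add_right hB _
              _ = walkCost wE x (y :: l') := hwalk.symm
          · have hxbd : x ∈ bdry E Q := (hQ x y hxy).2 ⟨hxQ, hy⟩
            have hyni : y ∉ Q \ bdry E Q := fun h => hy h.1
            have hrel : starRel E Q x y := Or.inl ⟨hxy, fun h => h.2 hxbd, hyni⟩
            calc (⨅ b ∈ bdry E Q, pdQ x b + D b t) ≤ pdQ x x + D x t :=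
                iInf₂_le x hxbd
              _ = D x t := by rw [hpdQ, pathDist_self, zero_add]
              _ ≤ starWeight E Q w x y + D y t := pathDist_cons hrel t
              _ ≤ wE x y + walkCost wE y l' :=
                add_le_add (starWeight_le_edge hxy) (ihA hyni)
              _ = walkCost wE x (y :: l') := hwalk.symm
  -- Key induction for the ≥ direction
  have key2 : ∀ (l : List V) (x : V), List.Chain (starRel E Q) x l →
      pathDist E wE x ((x :: l).getLast (List.cons_ne_nil x l)) ≤
        walkCost (starWeight E Q w) x l := by
    intro l
    induction l with
    | nil => intro x _; simp [walkCost, pathDist_self]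
    | cons y l' ih =>
        intro x hc
        obtain ⟨hxy, hc'⟩ := List.chain_cons.mp hc
        rw [List.getLast_cons (List.cons_ne_nil _ _)]
        calc pathDist E wE x ((y :: l').getLast (List.cons_ne_nil _ _))
            ≤ pathDist E wE x y +
              pathDist E wE y ((y :: l').getLast (List.cons_ne_nil _ _)) :=
              pathDist_triangle x y _
          _ ≤ starWeight E Q w x y + walkCost (starWeight E Q w) y l' :=
              add_le_add (pathDist_le_starWeight hxy) (ih y hc')
          _ = walkCost (starWeight E Q w) x (y :: l') := rfl
  refine le_antisymm ?_ ?_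
  · refine le_iInf₂ fun l hl => (key l s hl.1 hl.2).1 hs
  · refine le_iInf₂ fun l hl => ?_
    have := key2 l s hl.1
    rwa [hl.2] at this
end

section
/- Let h_0 ≥ 1 and define h_1 = h_0 + 3 and h_i = 2^{h_{i−1} − h_{i−2} − 2} · h_{i−1} for i ≥ 2. Then for every i ≥ 2, h_i · 2^{h_0 − h_{i−1} + i} ≤ (1/2) · h_{i−1} · 2^{h_0 − h_{i−2} + (i−1)}; consequently the sum over i ≥ 1 of h_i · 2^{h_0 − h_{i−1} + i} is at most 2 · h_1 · 2^{h_0 − h_0 + 1} = 4·h_1. -/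
/-- Geometric decay of the priority-queue charges.  With the level sequence
`h₀ ≥ 1`, `h₁ = h₀ + 3`, `hᵢ = 2^(hᵢ₋₁ − hᵢ₋₂ − 2) · hᵢ₋₁` for `i ≥ 2`, the
charge `hᵢ · 2^(h₀ − hᵢ₋₁ + i)` of level `i ≥ 2` is at most half the charge
`hᵢ₋₁ · 2^(h₀ − hᵢ₋₂ + (i−1))` of level `i − 1`; consequently the total charge
`∑_{i ≥ 1} hᵢ · 2^(h₀ − hᵢ₋₁ + i)` is at most `4·h₁`. -/
theorem level_charges_geometric_decay (h : ℕ → ℕ) (h0 : 1 ≤ h 0)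
    (h1 : h 1 = h 0 + 3)
    (hrec : ∀ i : ℕ, h (i + 2) = 2 ^ (h (i + 1) - h i - 2) * h (i + 1)) :
    (∀ i : ℕ,
      (h (i + 2) : ℝ) * (2 : ℝ) ^ ((h 0 : ℤ) - (h (i + 1) : ℤ) + ((i : ℤ) + 2)) ≤
        (1 / 2) *
          ((h (i + 1) : ℝ) * (2 : ℝ) ^ ((h 0 : ℤ) - (h i : ℤ) + ((i : ℤ) + 1)))) ∧
      (∑' i : ℕ,
          (h (i + 1) : ℝ) * (2 : ℝ) ^ ((h 0 : ℤ) - (h i : ℤ) + ((i : ℤ) + 1))) ≤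
        4 * (h 1 : ℝ) := by
  -- monotonicity: h (i+1) ≥ h i + 3
  have mono : ∀ i : ℕ, h i + 3 ≤ h (i + 1) := by
    intro i
    induction i with
    | zero => norm_num [h1]
    | succ n ih =>
      rw [hrec n]
      have h3 : 3 ≤ h (n + 1) := by
        have : h 0 + 3 ≤ h (n + 1) := by
          clear ih
          induction n with
          | zero => norm_num [h1]
          | succ m ihm =>
            have := hrec m
            have hk : 1 ≤ 2 ^ (h (m + 1) - h m - 2) := Nat.one_le_two_pow
            nlinarith
        omega
      have hk : 2 ≤ 2 ^ (h (n + 1) - h n - 2) := by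
        have : 1 ≤ h (n + 1) - h n - 2 := by omega
        calc 2 = 2 ^ 1 := rfl
        _ ≤ 2 ^ (h (n + 1) - h n - 2) := Nat.pow_le_pow_right (by norm_num) this
      nlinarith
  -- the key equality: each term is half the previous one
  set f : ℕ → ℝ := fun i => (h (i + 1) : ℝ) * (2 : ℝ) ^ ((h 0 : ℤ) - (h i : ℤ) + ((i : ℤ) + 1)) with hf
  have key : ∀ i : ℕ, f (i + 1) = (1 / 2) * f i := by
    intro i
    have hm := mono i
    have hcast : (h (i + 2) : ℝ) =
        (2 : ℝ) ^ ((h (i + 1) : ℤ) - (h i : ℤ) - 2) * (h (i + 1) : ℝ) := by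
      rw [hrec i]
      have hk : ((h (i + 1) - h i - 2 : ℕ) : ℤ) = (h (i + 1) : ℤ) - (h i : ℤ) - 2 := by
        omega
      push_cast
      rw [← zpow_natCast (2 : ℝ) (h (i + 1) - h i - 2), hk]
    simp only [hf]
    push_cast
    rw [hcast]
    rw [mul_comm ((2:ℝ) ^ _) ((h (i+1) : ℝ)), mul_assoc, ← zpow_add₀ (two_ne_zero)]
    have hrecip : (1 / 2 : ℝ) = (2 : ℝ) ^ (-1 : ℤ) := by norm_num
    rw [hrecip, mul_comm ((2:ℝ)^(-1:ℤ)) _, mul_assoc, ← zpow_add₀ (two_ne_zero)]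
    ring_nf
  have fform : ∀ i : ℕ, f i = 2 * (h 1 : ℝ) * (1 / 2) ^ i := by
    intro i
    induction i with
    | zero =>
      simp only [hf]
      have : ((h 0 : ℤ) - (h 0 : ℤ) + ((0 : ℤ) + 1)) = 1 := by ring
      simp [this, h1]
      ring
    | succ n ih =>
      rw [key n, ih]
      ring
  constructor
  · intro i
    have := key i
    simp only [hf] at this
    have hcast2 : ((i : ℤ) + 1 + 1) = ((i : ℤ) + 2) := by ring
    push_cast at this
    rw [le_iff_lt_or_eq]
    right
    convert this using 3
    ring
  · have : (∑' i : ℕ, f i) = 4 * (h 1 : ℝ) := by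
      calc (∑' i : ℕ, f i) = ∑' i : ℕ, 2 * (h 1 : ℝ) * (1 / 2) ^ i := by
              exact tsum_congr fform
        _ = 2 * (h 1 : ℝ) * ∑' i : ℕ, (1 / 2 : ℝ) ^ i := tsum_mul_left
        _ = 2 * (h 1 : ℝ) * 2 := by rw [tsum_geometric_two]
        _ = 4 * (h 1 : ℝ) := by ring
    exact le_of_eq this
end

section
/- In Dijkstra's algorithm on a directed graph with non-negative edge weights, at every step, every finite tentative distance of an unsettled vertex is at least the distance of the most recently settled vertex, and at most that distance plus the maximum edge weight W. Hence all keys present in the priority queue at any time differ by at most W. -/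
open scoped ENNReal NNReal

lemma walkCost_append {V : Type*} (w : V → V → ℝ≥0∞) (v : V) :
    ∀ (l : List V) (x : V), walkCost w x (l ++ [v]) =
      walkCost w x l + w ((x :: l).getLast (List.cons_ne_nil x l)) v
  | [], x => by simp [walkCost]
  | y :: l, x => by
    rw [List.cons_append, walkCost, walkCost, walkCost_append w v l y,
      List.getLast_cons_cons, add_assoc]

lemma chain_append_single {V : Type*} {E : V → V → Prop} {v : V} :
    ∀ {l : List V} {x : V}, List.Chain E x l →
      E ((x :: l).getLast (List.cons_ne_nil x l)) v → List.Chain E x (l ++ [v])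
  | [], x, _, he => by simpa using List.Chain.cons he List.Chain.nil
  | y :: l, x, h, he => by
    rcases List.chain_cons.1 h with ⟨hxy, hl⟩
    exact List.chain_cons.2 ⟨hxy, chain_append_single hl (by simpa using he)⟩

lemma pathDist_triangle_s15 {V : Type*} (E : V → V → Prop) (w : V → V → ℝ≥0∞)
    (s u v : V) (he : E u v) :
    pathDist E w s v ≤ pathDist E w s u + w u v := by
  rw [pathDist, pathDist, ENNReal.iInf_add]
  refine le_iInf fun l => ?_
  rw [ENNReal.iInf_add]
  refine le_iInf fun hl => ?_
  refine iInf₂_le (l ++ [v]) ⟨chain_append_single hl.1 (hl.2 ▸ he), ?_⟩ |>.trans ?_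
  · rw [walkCost_append, hl.2]
  · simp

/-- Dijkstra invariant.  Let `S` be the set of settled vertices, settled in order
of (final) distance from the source `s`, with `u₀` the most recently settled
vertex (of maximal distance among `S`).  The tentative distance of an unsettled
vertex `v` is the minimum of `δ(s,u) + w(u,v)` over settled `u` with an edge to
`v`.  If all edge weights are at most `W`, then every finite tentative distance
of an unsettled vertex lies between `δ(s,u₀)` and `δ(s,u₀) + W`; hence all keys
present in the priority queue differ by at most `W`. -/
theorem dijkstra_tentative_distance_window {V : Type*} [Fintype V]
    (E : V → V → Prop) (w : V → V → ℝ≥0) (W : ℝ≥0)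
    (hw : ∀ u v, E u v → w u v ≤ W)
    (s : V) (S : Set V) (hsS : s ∈ S)
    (hclosed : ∀ u ∈ S, ∀ v : V,
      pathDist E (fun a b => (w a b : ℝ≥0∞)) s v <
        pathDist E (fun a b => (w a b : ℝ≥0∞)) s u → v ∈ S)
    (u₀ : V) (hu₀ : u₀ ∈ S)
    (hfin : pathDist E (fun a b => (w a b : ℝ≥0∞)) s u₀ < ⊤)
    (hmax : ∀ u ∈ S,
      pathDist E (fun a b => (w a b : ℝ≥0∞)) s u ≤
        pathDist E (fun a b => (w a b : ℝ≥0∞)) s u₀) :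
    (∀ v ∉ S,
      (⨅ (u : V) (_ : u ∈ S ∧ E u v),
          pathDist E (fun a b => (w a b : ℝ≥0∞)) s u + w u v) ≠ ⊤ →
        pathDist E (fun a b => (w a b : ℝ≥0∞)) s u₀ ≤
            (⨅ (u : V) (_ : u ∈ S ∧ E u v),
              pathDist E (fun a b => (w a b : ℝ≥0∞)) s u + w u v) ∧
          (⨅ (u : V) (_ : u ∈ S ∧ E u v),
              pathDist E (fun a b => (w a b : ℝ≥0∞)) s u + w u v) ≤
            pathDist E (fun a b => (w a b : ℝ≥0∞)) s u₀ + W) ∧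
    ∀ v₁ ∉ S, ∀ v₂ ∉ S,
      (⨅ (u : V) (_ : u ∈ S ∧ E u v₁),
          pathDist E (fun a b => (w a b : ℝ≥0∞)) s u + w u v₁) ≠ ⊤ →
      (⨅ (u : V) (_ : u ∈ S ∧ E u v₂),
          pathDist E (fun a b => (w a b : ℝ≥0∞)) s u + w u v₂) ≠ ⊤ →
      (⨅ (u : V) (_ : u ∈ S ∧ E u v₁),
          pathDist E (fun a b => (w a b : ℝ≥0∞)) s u + w u v₁) ≤
        (⨅ (u : V) (_ : u ∈ S ∧ E u v₂),
            pathDist E (fun a b => (w a b : ℝ≥0∞)) s u + w u v₂) + W := by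
  
  set δ := pathDist E (fun a b => (w a b : ℝ≥0∞)) s with hδ
  have key_lb : ∀ v ∉ S, δ u₀ ≤ ⨅ (u : V) (_ : u ∈ S ∧ E u v), δ u + w u v := by
    intro v hv
    refine le_iInf₂ fun u hu => ?_
    have h1 : δ u₀ ≤ δ v := by
      by_contra h
      exact hv (hclosed u₀ hu₀ v (lt_of_not_ge h))
    exact h1.trans (pathDist_triangle_s15 E _ s u v hu.2)
  have key_ub : ∀ v ∉ S,
      (⨅ (u : V) (_ : u ∈ S ∧ E u v), δ u + w u v) ≠ ⊤ →
      (⨅ (u : V) (_ : u ∈ S ∧ E u v), δ u + w u v) ≤ δ u₀ + W := by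
    intro v _ hne
    simp only [ne_eq, iInf_eq_top, not_forall] at hne
    obtain ⟨u, hu, hut⟩ := hne
    refine (iInf₂_le u hu).trans ?_
    exact add_le_add (hmax u hu.1) (ENNReal.coe_le_coe.2 (hw u v hu.2))
  refine ⟨fun v hv hne => ⟨key_lb v hv, key_ub v hv hne⟩, fun v₁ hv₁ v₂ hv₂ hne₁ hne₂ => ?_⟩
  exact (key_ub v₁ hv₁ hne₁).trans (add_le_add_left (key_lb v₂ hv₂) _)
end
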